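/- Let G be a topological group that is locally connected, and let L be a normal subgroup of G which is locally connected in the subspace topology. Equip the subgroup G ×_L G := {(a,b) ∈ G × G : ab⁻¹ ∈ L} of G × G with the subspace topology of the product. Then the identity component of the topological group G ×_L G equals G⁰ ×_{L⁰} G⁰ := {(a,b) ∈ G⁰ × G⁰ : ab⁻¹ ∈ L⁰}, where G⁰ is the identity component of G and L⁰ is the identity component of the topological group L. (Lemma 2.10 of the paper; stated there for nilpotent Lie groups, local connectedness being what the proof uses.) -/

import Mathlib

/-- The relatively independent self-product `G ×_L G` of a group `G` over a normal
subgroup `L`, i.e. the subgroup `{(a₁, a₂) ∈ G × G : a₁ * a₂⁻¹ ∈ L}` of `G × G`. -/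
def relProd {G : Type*} [Group G] (L : Subgroup G) [hN : L.Normal] : Subgroup (G × G) where
  carrier := {p : G × G | p.1 * p.2⁻¹ ∈ L}
  one_mem' := by simpa using L.one_mem
  mul_mem' := by
    rintro ⟨a₁, a₂⟩ ⟨b₁, b₂⟩ ha hb
    have h : (a₁ * b₁) * (a₂ * b₂)⁻¹ = (a₁ * (b₁ * b₂⁻¹) * a₁⁻¹) * (a₁ * a₂⁻¹) := by group
    simp only [Set.mem_setOf_eq] at ha hb
    show a₁ * b₁ * (a₂ * b₂)⁻¹ ∈ L
    rw [h]
    exact mul_mem (hN.conj_mem _ hb a₁) ha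
  inv_mem' := by
    rintro ⟨a₁, a₂⟩ ha
    simp only [Set.mem_setOf_eq] at ha
    have h : a₁⁻¹ * (a₂⁻¹)⁻¹ = a₁⁻¹ * (a₁ * a₂⁻¹)⁻¹ * (a₁⁻¹)⁻¹ := by group
    show a₁⁻¹ * (a₂⁻¹)⁻¹ ∈ L
    rw [h]
    exact hN.conj_mem _ (L.inv_mem ha) a₁⁻¹

theorem mem_relProd {G : Type*} [Group G] {L : Subgroup G} [L.Normal] {p : G × G} :
    p ∈ relProd L ↔ p.1 * p.2⁻¹ ∈ L := Iff.rfl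


theorem connectedComponent_prod_eq {X Y : Type*} [TopologicalSpace X] [TopologicalSpace Y]
    (a : X) (b : Y) :
    connectedComponent (a, b) = connectedComponent a ×ˢ connectedComponent b := by
  apply Set.Subset.antisymm
  · intro p hp
    exact ⟨continuous_fst.image_connectedComponent_subset _ ⟨p, hp, rfl⟩,
      continuous_snd.image_connectedComponent_subset _ ⟨p, hp, rfl⟩⟩
  · exact (isConnected_connectedComponent.prod isConnected_connectedComponent).subset_connectedComponent
      ⟨mem_connectedComponent, mem_connectedComponent⟩

theorem Homeomorph.mem_connectedComponent_iff' {X Y : Type*} [TopologicalSpace X]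
    [TopologicalSpace Y] (h : X ≃ₜ Y) {x y : X} :
    x ∈ connectedComponent y ↔ h x ∈ connectedComponent (h y) := by
  constructor
  · intro hx
    exact h.continuous.image_connectedComponent_subset _ ⟨x, hx, rfl⟩
  · intro hx
    have := h.symm.continuous.image_connectedComponent_subset _ ⟨h x, hx, rfl⟩
    simpa using this

/-- `G ×_L G` is homeomorphic to `G × L` via `(a, b) ↦ (b, a * b⁻¹)`. -/
def relProdHomeo {G : Type*} [Group G] [TopologicalSpace G] [IsTopologicalGroup G]
    (L : Subgroup G) [L.Normal] : relProd L ≃ₜ G × L where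
  toFun p := (p.1.2, ⟨p.1.1 * p.1.2⁻¹, p.2⟩)
  invFun q := ⟨(↑q.2 * q.1, q.1), by simp [mem_relProd]⟩
  left_inv p := by
    apply Subtype.ext
    ext <;> simp
  right_inv q := by
    ext <;> simp
  continuous_toFun := by
    apply Continuous.prodMk
    · exact continuous_snd.comp continuous_subtype_val
    · apply Continuous.subtype_mk
      exact ((continuous_fst.comp continuous_subtype_val).mul
        ((continuous_snd.comp continuous_subtype_val).inv))
  continuous_invFun := by
    apply Continuous.subtype_mk
    exact ((continuous_subtype_val.comp continuous_snd).mul continuous_fst).prodMk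
      continuous_fst

/-- **Lemma 2.10.** If `G` is a locally connected topological group and `L` a normal subgroup
which is locally connected in the subspace topology, then the identity component of the
topological group `G ×_L G` equals `G⁰ ×_{L⁰} G⁰ = {(a,b) ∈ G⁰ × G⁰ : ab⁻¹ ∈ L⁰}`. -/
theorem identityComponent_relProd {G : Type*} [Group G] [TopologicalSpace G]
    [IsTopologicalGroup G] [LocallyConnectedSpace G]
    (L : Subgroup G) [L.Normal] [LocallyConnectedSpace L] :
    ∀ p : relProd L, p ∈ connectedComponent (1 : relProd L) ↔
      ((p : G × G).1 ∈ connectedComponent (1 : G) ∧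
       (p : G × G).2 ∈ connectedComponent (1 : G) ∧
       ∃ h : (p : G × G).1 * (p : G × G).2⁻¹ ∈ L,
         (⟨(p : G × G).1 * (p : G × G).2⁻¹, h⟩ : L) ∈ connectedComponent (1 : L)) := by
  intro p
  set e := relProdHomeo L
  have he1 : e 1 = ((1 : G), (1 : L)) := by
    apply Prod.ext
    · rfl
    · exact Subtype.ext (by simp [e, relProdHomeo])
  have key : p ∈ connectedComponent (1 : relProd L) ↔
      (p : G × G).2 ∈ connectedComponent (1 : G) ∧
      (⟨(p : G × G).1 * (p : G × G).2⁻¹, p.2⟩ : L) ∈ connectedComponent (1 : L) := by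
    rw [e.mem_connectedComponent_iff', he1, connectedComponent_prod_eq]
    exact Iff.rfl
  have hL : ∀ x : L, x ∈ connectedComponent (1 : L) →
      (x : G) ∈ connectedComponent (1 : G) := by
    intro x hx
    have := continuous_subtype_val.image_connectedComponent_subset (1 : L) ⟨x, hx, rfl⟩
    simpa using this
  rw [key]
  constructor
  · rintro ⟨hb, hl⟩
    refine ⟨?_, hb, p.2, hl⟩
    have : (p : G × G).1 = ((p : G × G).1 * (p : G × G).2⁻¹) * (p : G × G).2 := by group
    rw [this]
    exact mul_mem_connectedComponent_one (hL _ hl) hb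
  · rintro ⟨_, hb, h, hl⟩
    exact ⟨hb, hl⟩
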